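/- Let X be a compact complex n-manifold with an SKT metric ω, and suppose ω is a critical point of the functional F on the cone of SKT metrics, i.e. d/dt|_{t=0} F(ω + tγ) = 0 for all real (1,1)-forms γ ∈ ker(∂∂̄). Then ω is Kähler. Conversely every Kähler metric is a critical point (indeed a minimizer with F = 0) of F. -/

import Mathlib

/-!
STATEMENT 19 (abstract setting).
`V` models the real `(1,1)`-forms, `W` the real `(2,2)`-forms and `W'` the real
3-forms; `ddbar = i∂∂̄` and `pdel = ∂`, so the SKT cone consists of positive forms in
`ker ddbar` and "ω is Kähler" reads `pdel ω = 0`.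
`F(ω) = ‖ρ_ω‖²_ω ≥ 0` is the SKT energy functional, with `F(λω) = λ^n F(ω)` and
`F(ω) = 0 ↔ ω Kähler` (Lemma 2.4 of the paper, hypothesis `hFK`).
"ω is a critical point of `F`" means: for every pluriclosed real `(1,1)`-form γ, the
derivative `d/dt|_{t=0} F(ω + tγ)`, whenever it exists, vanishes.
Conclusion: ω is a critical point of `F` iff ω is Kähler (in particular every Kähler
metric, being a minimiser with `F = 0`, is a critical point).
-/
theorem stmt_19
    (V W W' : Type*) [AddCommGroup V] [Module ℝ V]
    [AddCommGroup W] [Module ℝ W] [AddCommGroup W'] [Module ℝ W']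
    (n : ℕ) (hn : 1 ≤ n)
    (ddbar : V →ₗ[ℝ] W) (pdel : V →ₗ[ℝ] W')
    (F : V → ℝ)
    (hFpos : ∀ v : V, 0 ≤ F v)
    (ω : V)
    -- ω is SKT
    (hω : ddbar ω = 0)
    -- the scaling law F(λv) = λ^n F(v)
    (hscale : ∀ l : ℝ, 0 < l → ∀ v : V, F (l • v) = l ^ n * F v)
    -- F(ω) = 0 iff ω is Kähler
    (hFK : F ω = 0 ↔ pdel ω = 0) :
    (∀ γ : V, ddbar γ = 0 →
        ∀ c : ℝ, HasDerivAt (fun t : ℝ => F (ω + t • γ)) c 0 → c = 0)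
      ↔ pdel ω = 0 := by
  constructor
  · intro hcrit
    -- take γ = ω: F(ω + tω) = (1+t)^n F(ω) near 0, so the derivative is n F(ω)
    have h1 : HasDerivAt (fun t : ℝ => (1 + t) ^ n * F ω) ((n : ℝ) * F ω) 0 := by
      have h0 : HasDerivAt (fun t : ℝ => (1 + t) ^ n)
          ((n : ℝ) * (1 + (0:ℝ)) ^ (n - 1) * 1) 0 :=
        ((hasDerivAt_id (0:ℝ)).const_add 1).pow n
      have := h0.mul_const (F ω)
      simpa using this
    have heq : (fun t : ℝ => F (ω + t • ω)) =ᶠ[nhds (0:ℝ)]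
        (fun t : ℝ => (1 + t) ^ n * F ω) := by
      have hmem : Set.Ioi (-1 : ℝ) ∈ nhds (0:ℝ) :=
        Ioi_mem_nhds (by norm_num)
      filter_upwards [hmem] with t ht
      have hpos : (0:ℝ) < 1 + t := by have := neg_lt_iff_pos_add.mp (Set.mem_Ioi.mp ht); linarith
      have : ω + t • ω = (1 + t) • ω := by
        rw [add_smul, one_smul]
      rw [this, hscale _ hpos]
    have h2 : HasDerivAt (fun t : ℝ => F (ω + t • ω)) ((n : ℝ) * F ω) 0 :=
      h1.congr_of_eventuallyEq heq
    have := hcrit ω hω _ h2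
    have hF0 : F ω = 0 := by
      have hn' : (n : ℝ) ≠ 0 := by positivity
      exact (mul_eq_zero.mp this).resolve_left hn'
    exact hFK.mp hF0
  · intro hK γ hγ c hc
    have hF0 : F ω = 0 := hFK.mpr hK
    have hmin : IsLocalMin (fun t : ℝ => F (ω + t • γ)) 0 := by
      apply Filter.Eventually.of_forall
      intro t
      simp only [zero_smul, add_zero, hF0]
      exact hFpos _
    exact hmin.hasDerivAt_eq_zero hc
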